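/- Let n ≥ 2 and m ≥ 1 be integers, let i be an integer with 0 ≤ i ≤ m−1, let u_j(s) = cosh(s)^j · sinh(s)^{2−n−m} for s > 0, and let κ_j = (m−j−1)(m+n−2−j). Then for every s > 0, applying successively the operators (κ_{i−2} − 𝒟_m), (κ_{i−4} − 𝒟_m), …, (κ_{i−2⌊i/2⌋} − 𝒟_m) (in this order, (κ_{i−2} − 𝒟_m) applied first; the empty composition when i ≤ 1) to u_i yields a strictly positive value: ((κ_{i−2⌊i/2⌋} − 𝒟_m) ∘ ⋯ ∘ (κ_{i−2} − 𝒟_m)) u_i (s) > 0. -/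

import Mathlib

/-- The second-order operator `𝒟_k f (s) = f''(s) + (n-1)·coth(s)·f'(s)
    - (k(k+n-2)/sinh²(s))·f(s)`. -/
noncomputable def Dop (n k : ℤ) (f : ℝ → ℝ) : ℝ → ℝ := fun s =>
  deriv (deriv f) s + ((n : ℝ) - 1) * (Real.cosh s / Real.sinh s) * deriv f s
    - ((k : ℝ) * ((k : ℝ) + (n : ℝ) - 2) / (Real.sinh s) ^ 2) * f s

/-- `(c - 𝒟_k) f = c·f - 𝒟_k f`. -/
noncomputable def Bop (n k : ℤ) (c : ℝ) (f : ℝ → ℝ) : ℝ → ℝ := fun s =>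
  c * f s - Dop n k f s

/-- `chainB n m κ i q` is the composition
    `(κ_{i-2q} - 𝒟_m) ∘ ⋯ ∘ (κ_{i-4} - 𝒟_m) ∘ (κ_{i-2} - 𝒟_m)`,
    i.e. the operators `(κ_{i-2p} - 𝒟_m)` for `p = 1, …, q`, with `p = 1` applied first;
    the empty composition (`q = 0`) is the identity. -/
noncomputable def chainB (n m : ℤ) (κ : ℤ → ℝ) (i : ℤ) : ℕ → (ℝ → ℝ) → (ℝ → ℝ)
  | 0 => id
  | q + 1 => fun f => Bop n m (κ (i - 2 * ((q : ℤ) + 1))) (chainB n m κ i q f)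



noncomputable def Wf (j b : ℤ) : ℝ → ℝ := fun s => Real.cosh s ^ j * Real.sinh s ^ b

lemma Wf_pos (j b : ℤ) {s : ℝ} (hs : 0 < s) : 0 < Wf j b s :=
  mul_pos (zpow_pos (Real.cosh_pos s) j) (zpow_pos (Real.sinh_pos_iff.mpr hs) b)

lemma hdWf (j b : ℤ) {s : ℝ} (hs : 0 < s) :
    HasDerivAt (Wf j b)
      ((j : ℝ) * Wf (j-1) (b+1) s + (b : ℝ) * Wf (j+1) (b-1) s) s := by
  have ht : Real.sinh s ≠ 0 := (Real.sinh_pos_iff.mpr hs).ne'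
  have hc : Real.cosh s ≠ 0 := (Real.cosh_pos (x := s)).ne'
  have h1 : HasDerivAt (fun x => Real.cosh x ^ j)
      (((j : ℝ) * Real.cosh s ^ (j-1)) * Real.sinh s) s :=
    (hasDerivAt_zpow j (Real.cosh s) (Or.inl hc)).comp s (Real.hasDerivAt_cosh s)
  have h2 : HasDerivAt (fun x => Real.sinh x ^ b)
      (((b : ℝ) * Real.sinh s ^ (b-1)) * Real.cosh s) s :=
    (hasDerivAt_zpow b (Real.sinh s) (Or.inl ht)).comp s (Real.hasDerivAt_sinh s)
  have h := h1.fun_mul h2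
  refine h.congr_deriv ?_
  simp only [Wf]
  rw [zpow_add_one₀ ht b, zpow_add_one₀ hc j, zpow_sub_one₀ ht b, zpow_sub_one₀ hc j]
  field_simp


lemma key_alg (n m j : ℤ) {s : ℝ} (hs : 0 < s) :
    ((j : ℝ) * (((j - 1 : ℤ) : ℝ) * Wf (j-2) ((2-n-m)+2) s
        + (((2-n-m : ℤ) + 1 : ℤ) : ℝ) * Wf j (2-n-m) s)
      + ((2-n-m : ℤ) : ℝ) * (((j + 1 : ℤ) : ℝ) * Wf j (2-n-m) s
        + (((2-n-m : ℤ) - 1 : ℤ) : ℝ) * Wf (j+2) ((2-n-m)-2) s))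
    + ((n : ℝ) - 1) * (Real.cosh s / Real.sinh s) *
        ((j : ℝ) * Wf (j-1) ((2-n-m)+1) s + ((2-n-m : ℤ) : ℝ) * Wf (j+1) ((2-n-m)-1) s)
    - ((m : ℝ) * ((m : ℝ) + (n : ℝ) - 2) / (Real.sinh s) ^ 2) * Wf j (2-n-m) s
    = (((m - j - 1) * (m + n - 2 - j) : ℤ) : ℝ) * Wf j (2-n-m) s
      - ((j : ℝ) * ((j : ℝ) - 1)) * Wf (j-2) (2-n-m) s := by
  have ht0 : (0:ℝ) < Real.sinh s := Real.sinh_pos_iff.mpr hs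
  have ht : Real.sinh s ≠ 0 := ht0.ne'
  have hc : Real.cosh s ≠ 0 := (Real.cosh_pos s).ne'
  have hsq : Real.cosh s ^ (2:ℕ) = Real.sinh s ^ (2:ℕ) + 1 := Real.cosh_sq s
  set B : ℤ := 2 - n - m with hB
  -- structural identities
  have W1 : ∀ k e : ℤ, Wf k (e+2) s = Wf k e s * Real.sinh s ^ (2:ℕ) := by
    intro k e
    simp only [Wf]
    rw [zpow_add₀ ht, show ((2:ℤ)) = ((2:ℕ):ℤ) by norm_num, zpow_natCast]
    ring
  have W2 : ∀ k e : ℤ, Wf (k+2) e s = Wf k e s * Real.cosh s ^ (2:ℕ) := by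
    intro k e
    simp only [Wf]
    rw [zpow_add₀ hc, show ((2:ℤ)) = ((2:ℕ):ℤ) by norm_num, zpow_natCast]
    ring
  have C1 : ∀ k e : ℤ, (Real.cosh s / Real.sinh s) * Wf k e s = Wf (k+1) (e-1) s := by
    intro k e
    simp only [Wf]
    rw [zpow_add_one₀ hc, zpow_sub_one₀ ht]
    field_simp
  -- point identities
  have hA : Wf (j-2) (B+2) s = Wf j B s - Wf (j-2) B s := by
    have h2 : Wf j B s = Wf (j-2) B s * Real.cosh s ^ (2:ℕ) := by
      have := W2 (j-2) B; rw [show j - 2 + 2 = j by ring] at this; exact this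
    rw [W1, h2, hsq]; ring
  have hBB : Wf (j+2) (B-2) s = Wf j (B-2) s + Wf j B s := by
    have h1 : Wf j B s = Wf j (B-2) s * Real.sinh s ^ (2:ℕ) := by
      have := W1 j (B-2); rw [show B - 2 + 2 = B by ring] at this; exact this
    rw [W2, hsq, h1]; ring
  have hC1 : (Real.cosh s / Real.sinh s) * Wf (j-1) (B+1) s = Wf j B s := by
    have := C1 (j-1) (B+1)
    rw [show j - 1 + 1 = j by ring, show B + 1 - 1 = B by ring] at this
    exact this
  have hC2 : (Real.cosh s / Real.sinh s) * Wf (j+1) (B-1) s = Wf (j+2) (B-2) s := by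
    have := C1 (j+1) (B-1)
    rw [show j + 1 + 1 = j + 2 by ring, show B - 1 - 1 = B - 2 by ring] at this
    exact this
  have hE : ((m : ℝ) * ((m : ℝ) + (n : ℝ) - 2) / (Real.sinh s) ^ 2) * Wf j B s
      = (m : ℝ) * ((m : ℝ) + (n : ℝ) - 2) * Wf j (B-2) s := by
    have h1 : Wf j B s = Wf j (B-2) s * Real.sinh s ^ (2:ℕ) := by
      have := W1 j (B-2); rw [show B - 2 + 2 = B by ring] at this; exact this
    rw [h1]; field_simp
  have hmul : ((n : ℝ) - 1) * (Real.cosh s / Real.sinh s) *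
        ((j : ℝ) * Wf (j-1) (B+1) s + ((B : ℤ) : ℝ) * Wf (j+1) (B-1) s)
      = ((n : ℝ) - 1) * ((j : ℝ) * Wf j B s + ((B : ℤ) : ℝ) * Wf (j+2) (B-2) s) := by
    rw [mul_assoc]
    congr 1
    rw [mul_add, mul_left_comm, hC1, mul_left_comm, hC2]
  rw [hmul, hE, hA, hBB]
  simp only [hB]
  push_cast
  ring


lemma Dop_sum (n m : ℤ) (N : ℕ) (a : ℕ → ℝ) (jj : ℕ → ℤ) (f : ℝ → ℝ)
    (hf : ∀ x, 0 < x → f x = ∑ r ∈ Finset.range N, a r * Wf (jj r) (2-n-m) x)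
    {s : ℝ} (hs : 0 < s) :
    Dop n m f s = ∑ r ∈ Finset.range N, a r *
      ((((m - jj r - 1) * (m + n - 2 - jj r) : ℤ) : ℝ) * Wf (jj r) (2-n-m) s
        - (((jj r) * (jj r - 1) : ℤ) : ℝ) * Wf (jj r - 2) (2-n-m) s) := by
  set B : ℤ := 2 - n - m with hB
  set F : ℝ → ℝ := fun x => ∑ r ∈ Finset.range N, a r * Wf (jj r) B x with hF
  set G : ℝ → ℝ := fun x => ∑ r ∈ Finset.range N,
    a r * ((jj r : ℝ) * Wf (jj r - 1) (B+1) x + ((B : ℤ) : ℝ) * Wf (jj r + 1) (B-1) x) with hG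
  have hmem : Set.Ioi (0:ℝ) ∈ nhds s := Ioi_mem_nhds hs
  have hfF : f =ᶠ[nhds s] F := Filter.eventuallyEq_of_mem hmem hf
  have hF' : ∀ x, 0 < x → HasDerivAt F (G x) x := fun x hx =>
    HasDerivAt.fun_sum fun r _ => ((hdWf (jj r) B hx).const_mul (a r))
  have hG' : HasDerivAt G (∑ r ∈ Finset.range N, a r *
      ((jj r : ℝ) * (((jj r - 1 : ℤ) : ℝ) * Wf (jj r - 2) (B+2) s
          + ((B + 1 : ℤ) : ℝ) * Wf (jj r) B s)
        + ((B : ℤ) : ℝ) * (((jj r + 1 : ℤ) : ℝ) * Wf (jj r) B s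
          + ((B - 1 : ℤ) : ℝ) * Wf (jj r + 2) (B-2) s))) s := by
    apply HasDerivAt.fun_sum
    intro r _
    have h1 := (hdWf (jj r - 1) (B+1) hs).const_mul ((jj r : ℝ))
    have h2 := (hdWf (jj r + 1) (B-1) hs).const_mul (((B : ℤ)) : ℝ)
    have h := (h1.add h2).const_mul (a r)
    rw [show jj r - 1 - 1 = jj r - 2 by ring, show jj r - 1 + 1 = jj r by ring,
        show B + 1 + 1 = B + 2 by ring, show B + 1 - 1 = B by ring,
        show jj r + 1 - 1 = jj r by ring, show jj r + 1 + 1 = jj r + 2 by ring,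
        show B - 1 + 1 = B by ring, show B - 1 - 1 = B - 2 by ring] at h
    exact h
  have e0 : f s = F s := hf s hs
  have e1 : deriv f s = G s := by rw [hfF.deriv_eq]; exact (hF' s hs).deriv
  have e2 : deriv (deriv f) s = ∑ r ∈ Finset.range N, a r *
      ((jj r : ℝ) * (((jj r - 1 : ℤ) : ℝ) * Wf (jj r - 2) (B+2) s
          + ((B + 1 : ℤ) : ℝ) * Wf (jj r) B s)
        + ((B : ℤ) : ℝ) * (((jj r + 1 : ℤ) : ℝ) * Wf (jj r) B s
          + ((B - 1 : ℤ) : ℝ) * Wf (jj r + 2) (B-2) s)) := by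
    have hd : deriv f =ᶠ[nhds s] G :=
      hfF.deriv.trans (Filter.eventuallyEq_of_mem hmem fun x hx => (hF' x hx).deriv)
    rw [hd.deriv_eq]; exact hG'.deriv
  simp only [Dop]
  rw [e0, e1, e2, hF, hG]
  simp only []
  rw [Finset.mul_sum, Finset.mul_sum, ← Finset.sum_add_distrib, ← Finset.sum_sub_distrib]
  refine Finset.sum_congr rfl fun r _ => ?_
  have hk := key_alg n m (jj r) hs
  rw [← hB] at hk
  push_cast at hk ⊢
  linear_combination (a r) * hk


lemma sum_step (q : ℕ) (a W κc c : ℕ → ℝ) (k' : ℝ) (ha : a (q+1) = 0) :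
    ∑ r ∈ Finset.range (q+2),
      (if r = 0 then (k' - κc 0) * a 0
       else (k' - κc r) * a r + c (r-1) * a (r-1)) * W r
    = k' * ∑ r ∈ Finset.range (q+1), a r * W r
      - ∑ r ∈ Finset.range (q+1), a r * (κc r * W r - c r * W (r+1)) := by
  rw [Finset.sum_range_succ']
  simp only [Nat.succ_ne_zero, if_false, if_true, Nat.add_sub_cancel, reduceIte]
  have hsplit : ∀ p ∈ Finset.range (q+1), ((k' - κc (p+1)) * a (p+1) + c p * a p) * W (p+1)
      = (k' - κc (p+1)) * a (p+1) * W (p+1) + c p * (a p * W (p+1)) := fun p _ => by ring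
  rw [Finset.sum_congr rfl hsplit, Finset.sum_add_distrib,
    Finset.sum_range_succ (fun p => (k' - κc (p+1)) * a (p+1) * W (p+1)) q, ha]
  have hr : ∀ r ∈ Finset.range (q+1), k' * (a r * W r) - a r * (κc r * W r - c r * W (r+1))
      = (k' - κc r) * a r * W r + c r * (a r * W (r+1)) := fun r _ => by ring
  rw [Finset.mul_sum, ← Finset.sum_sub_distrib, Finset.sum_congr rfl hr,
    Finset.sum_add_distrib, Finset.sum_range_succ' (fun r => (k' - κc r) * a r * W r) q]
  ring


lemma consec_nonneg (k : ℤ) : 0 ≤ k * (k - 1) := by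
  rcases le_or_gt k 0 with h | h
  · nlinarith [mul_nonneg (neg_nonneg.mpr h) (by omega : (0:ℤ) ≤ 1 - k)]
  · exact mul_nonneg (by omega) (by omega)

lemma kappa_lt (n m j j' : ℤ) (hn : 2 ≤ n) (hj : j < j') (hj' : j' ≤ m - 1) :
    (m - j' - 1) * (m + n - 2 - j') < (m - j - 1) * (m + n - 2 - j) := by
  nlinarith [mul_pos (show (0:ℤ) < j' - j by omega)
    (show (0:ℤ) < 2*m + n - 3 - j - j' by omega)]

lemma kappa_le (n m j j' : ℤ) (hn : 2 ≤ n) (hj : j ≤ j') (hj' : j' ≤ m - 1) :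
    (m - j' - 1) * (m + n - 2 - j') ≤ (m - j - 1) * (m + n - 2 - j) := by
  rcases eq_or_lt_of_le hj with rfl | h
  · exact le_rfl
  · exact (kappa_lt n m j j' hn h hj').le

lemma chain_inv (n m : ℤ) (hn : 2 ≤ n) (hm : 1 ≤ m) (i : ℤ) (hi0 : 0 ≤ i) (him : i ≤ m - 1)
    (u : ℤ → ℝ → ℝ)
    (hu : ∀ (j : ℤ) (s : ℝ), u j s = Real.cosh s ^ j * Real.sinh s ^ (2 - n - m))
    (κ : ℤ → ℝ) (hκ : ∀ j : ℤ, κ j = ((m - j - 1) * (m + n - 2 - j) : ℤ)) :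
    ∀ q : ℕ, ∃ a : ℕ → ℝ, 0 < a 0 ∧ (∀ r, 0 ≤ a r) ∧ (∀ r, q < r → a r = 0) ∧
      ∀ s, 0 < s → chainB n m κ i q (u i) s
        = ∑ r ∈ Finset.range (q+1), a r * Wf (i - 2*(r:ℤ)) (2-n-m) s := by
  intro q
  induction q with
  | zero =>
    refine ⟨fun r => if r = 0 then 1 else 0, by norm_num,
      fun r => by by_cases h : r = 0 <;> simp [h],
      fun r hr => by have h : r ≠ 0 := by omega
                     simp [h],
      fun s hs => ?_⟩
    simp [chainB, Wf, hu]
  | succ q ih =>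
    obtain ⟨a, ha0, hann, hvan, hsum⟩ := ih
    set κ' : ℝ := κ (i - 2*((q:ℤ)+1)) with hκ'
    set κc : ℕ → ℝ := fun r => κ (i - 2*(r:ℤ)) with hκc
    set cc : ℕ → ℝ := fun p => (((i - 2*(p:ℤ)) * (i - 2*(p:ℤ) - 1) : ℤ) : ℝ) with hcc
    have hκ'c : ∀ p : ℕ, p ≤ q → κc (p+1) ≤ κ' := by
      intro p hp
      have e : κc (p+1) = κ (i - 2*((p:ℤ)+1)) := by
        show κ (i - 2*(((p+1:ℕ)):ℤ)) = _
        push_cast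
        ring_nf
      rw [e, hκ', hκ (i - 2*((q:ℤ)+1)), hκ (i - 2*((p:ℤ)+1))]
      exact_mod_cast kappa_le n m (i - 2*((q:ℤ)+1)) (i - 2*((p:ℤ)+1)) hn (by omega) (by omega)
    have hκ'0 : κc 0 < κ' := by
      have e : κc 0 = κ i := by
        show κ (i - 2*(((0:ℕ)):ℤ)) = _
        norm_num
      rw [e, hκ', hκ (i - 2*((q:ℤ)+1)), hκ i]
      exact_mod_cast kappa_lt n m (i - 2*((q:ℤ)+1)) i hn (by omega) him
    have hccn : ∀ p : ℕ, 0 ≤ cc p := by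
      intro p
      show (0:ℝ) ≤ (((i - 2*(p:ℤ)) * (i - 2*(p:ℤ) - 1) : ℤ) : ℝ)
      exact_mod_cast consec_nonneg (i - 2*(p:ℤ))
    refine ⟨fun r => if r = 0 then (κ' - κc 0) * a 0
        else (κ' - κc r) * a r + cc (r-1) * a (r-1), ?_, ?_, ?_, ?_⟩
    · simpa using mul_pos (by linarith) ha0
    · intro r
      match r with
      | 0 => simpa using (mul_pos (by linarith) ha0).le
      | p + 1 =>
        simp only [Nat.succ_ne_zero, if_false, Nat.add_sub_cancel]
        rcases le_or_gt (p+1) q with h | h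
        · exact add_nonneg (mul_nonneg (by linarith [hκ'c p (by omega)]) (hann _))
            (mul_nonneg (hccn p) (hann p))
        · rw [hvan (p+1) h]
          simpa using mul_nonneg (hccn p) (hann p)
    · intro r hr
      match r with
      | p + 1 =>
        simp only [Nat.succ_ne_zero, if_false, Nat.add_sub_cancel]
        rw [hvan (p+1) (by omega), hvan p (by omega)]
        ring
    · intro s hs
      have hchain : chainB n m κ i (q+1) (u i) s
          = κ' * chainB n m κ i q (u i) s - Dop n m (chainB n m κ i q (u i)) s := rfl
      have hD := Dop_sum n m (q+1) a (fun r => i - 2*(r:ℤ)) (chainB n m κ i q (u i)) hsum hs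
      rw [hchain, hsum s hs, hD]
      have hre : ∀ r ∈ Finset.range (q+1),
          a r * ((((m - (i - 2*(r:ℤ)) - 1) * (m + n - 2 - (i - 2*(r:ℤ))) : ℤ) : ℝ)
              * Wf (i - 2*(r:ℤ)) (2-n-m) s
            - (((i - 2*(r:ℤ)) * (i - 2*(r:ℤ) - 1) : ℤ) : ℝ) * Wf (i - 2*(r:ℤ) - 2) (2-n-m) s)
          = a r * (κc r * Wf (i - 2*(r:ℤ)) (2-n-m) s
            - cc r * Wf (i - 2*((r:ℤ)+1)) (2-n-m) s) := by
        intro r _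
        have e1 : κc r = κ (i - 2*(r:ℤ)) := rfl
        have e2 : cc r = (((i - 2*(r:ℤ)) * (i - 2*(r:ℤ) - 1) : ℤ) : ℝ) := rfl
        rw [e1, e2, hκ (i - 2*(r:ℤ)), show i - 2*((r:ℤ)+1) = i - 2*(r:ℤ) - 2 by ring]
      rw [Finset.sum_congr rfl hre]
      have hss := sum_step q a (fun r => Wf (i - 2*(r:ℤ)) (2-n-m) s) κc cc κ'
        (hvan (q+1) (by omega))
      exact hss.symm

/-- The positivity claim in the proof of Lemma `L:Ind`:
    `((κ_{i-2⌊i/2⌋} - 𝒟_m) ∘ ⋯ ∘ (κ_{i-2} - 𝒟_m)) u_i (s) > 0`,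
    where `u_j(s) = cosh^j(s) sinh^{2-n-m}(s)` and `κ_j = (m-j-1)(m+n-2-j)`. -/
theorem stmt_7 (n m : ℤ) (hn : 2 ≤ n) (hm : 1 ≤ m)
    (i : ℤ) (hi0 : 0 ≤ i) (him : i ≤ m - 1)
    (u : ℤ → ℝ → ℝ)
    (hu : ∀ (j : ℤ) (s : ℝ), u j s = Real.cosh s ^ j * Real.sinh s ^ (2 - n - m))
    (κ : ℤ → ℝ) (hκ : ∀ j : ℤ, κ j = ((m - j - 1) * (m + n - 2 - j) : ℤ))
    (s : ℝ) (hs : 0 < s) :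
    0 < chainB n m κ i (i / 2).toNat (u i) s := by
  obtain ⟨a, ha0, hann, hvan, hsum⟩ :=
    chain_inv n m hn hm i hi0 him u hu κ hκ ((i / 2).toNat)
  rw [hsum s hs]
  apply Finset.sum_pos'
  · intro r _
    exact mul_nonneg (hann r) (Wf_pos _ _ hs).le
  · exact ⟨0, Finset.mem_range.mpr (by omega), mul_pos ha0 (Wf_pos _ _ hs)⟩
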